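/- Let k ≥ 2 and p > k+1, and let H ⊆ [p]^m have k-Natarajan dimension d_N and finite k-exponential dimension d_E. Then d_E ≤ 60 k² d_N log(p), where log is the natural logarithm. -/

import Mathlib

/-- `H ⊆ [p]^[m]` `k`-Natarajan shatters the set `S` of coordinates. -/
def kNatShatters {m p : ℕ} (k : ℕ) (H : Finset (Fin m → Fin p)) (S : Finset (Fin m)) : Prop :=
  ∃ y : Fin m → Finset (Fin p),
    (∀ i ∈ S, (y i).card = k + 1) ∧
    ∀ g : Fin m → Fin p, (∀ i ∈ S, g i ∈ y i) → ∃ f ∈ H, ∀ i ∈ S, f i = g i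

/-- Recursive Sauer-type bound. -/
def sauerPhi (k B : ℕ) : ℕ → ℕ → ℕ
  | 0, _ => 1
  | n+1, 0 => k * sauerPhi k B n 0
  | n+1, d+1 => k * sauerPhi k B n (d+1) + B * sauerPhi k B n d

lemma sauerPhi_zero (k B d : ℕ) : sauerPhi k B 0 d = 1 := by cases d <;> rfl

/-- values appearing at the last coordinate above a given restriction -/
def lastVals {n p : ℕ} (G : Finset (Fin (n+1) → Fin p)) (g' : Fin n → Fin p) :
    Finset (Fin p) :=
  (G.filter fun f => Fin.init f = g').image fun f => f (Fin.last n)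

lemma le_add_choose (k : ℕ) : ∀ c : ℕ, c ≤ k + c.choose (k+1) := by
  intro c
  induction c with
  | zero => omega
  | succ c ih =>
    rcases le_or_gt (c+1) k with h | h
    · exact le_trans h (Nat.le_add_right _ _)
    · have hkc : k ≤ c := by omega
      have h1 : (c+1).choose (k+1) = c.choose k + c.choose (k+1) := Nat.succ_sub_one (k+1) ▸ rfl
      have h2 : 1 ≤ c.choose k := Nat.choose_pos hkc
      have h3 : (c+1).choose (k+1) = c.choose k + c.choose (k+1) := by
        rw [Nat.choose_succ_succ]
      omega

lemma shatters_image_init {n p k : ℕ} (G : Finset (Fin (n+1) → Fin p)) (S : Finset (Fin n))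
    (h : kNatShatters k (G.image Fin.init) S) :
    kNatShatters k G (S.image Fin.castSucc) := by
  classical
  obtain ⟨y, hy1, hy2⟩ := h
  refine ⟨Fin.snoc y ∅, ?_, ?_⟩
  · intro j hj
    obtain ⟨i, hi, rfl⟩ := Finset.mem_image.1 hj
    rw [Fin.snoc_castSucc]; exact hy1 i hi
  · intro g hg
    obtain ⟨f', hf'G, hf'⟩ := hy2 (Fin.init g) (fun i hi => by
      have := hg _ (Finset.mem_image_of_mem _ hi)
      rwa [Fin.snoc_castSucc] at this)
    obtain ⟨f, hfG, rfl⟩ := Finset.mem_image.1 hf'G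
    refine ⟨f, hfG, fun j hj => ?_⟩
    obtain ⟨i, hi, rfl⟩ := Finset.mem_image.1 hj
    exact hf' i hi

lemma shatters_insert_last {n p k : ℕ} (G : Finset (Fin (n+1) → Fin p)) (T : Finset (Fin p))
    (hT : T.card = k + 1) (S : Finset (Fin n))
    (h : kNatShatters k ((G.image Fin.init).filter fun g' => T ⊆ lastVals G g') S) :
    kNatShatters k G (insert (Fin.last n) (S.image Fin.castSucc)) := by
  classical
  obtain ⟨y, hy1, hy2⟩ := h
  refine ⟨Fin.snoc y T, ?_, ?_⟩
  · intro j hj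
    rcases Finset.mem_insert.1 hj with rfl | hj
    · rw [Fin.snoc_last]; exact hT
    · obtain ⟨i, hi, rfl⟩ := Finset.mem_image.1 hj
      rw [Fin.snoc_castSucc]; exact hy1 i hi
  · intro g hg
    obtain ⟨f', hf'G, hf'⟩ := hy2 (Fin.init g) (fun i hi => by
      have := hg _ (Finset.mem_insert_of_mem (Finset.mem_image_of_mem _ hi))
      rwa [Fin.snoc_castSucc] at this)
    rw [Finset.mem_filter] at hf'G
    have hlast : g (Fin.last n) ∈ T := by
      have := hg _ (Finset.mem_insert_self _ _)
      rwa [Fin.snoc_last] at this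
    obtain ⟨f, hf, hfl⟩ := Finset.mem_image.1 (hf'G.2 hlast)
    rw [Finset.mem_filter] at hf
    refine ⟨f, hf.1, fun j hj => ?_⟩
    rcases Finset.mem_insert.1 hj with rfl | hj
    · exact hfl
    · obtain ⟨i, hi, rfl⟩ := Finset.mem_image.1 hj
      have h1 : f' i = Fin.init g i := hf' i hi
      have h2 : Fin.init f = f' := hf.2
      calc f i.castSucc = Fin.init f i := rfl
        _ = f' i := by rw [h2]
        _ = g i.castSucc := h1

lemma card_insert_last {n : ℕ} (S : Finset (Fin n)) :
    (insert (Fin.last n) (S.image Fin.castSucc)).card = S.card + 1 := by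
  classical
  rw [Finset.card_insert_of_notMem, Finset.card_image_of_injective _ (Fin.castSucc_injective n)]
  intro hmem
  obtain ⟨i, _, hi⟩ := Finset.mem_image.1 hmem
  exact absurd hi (Fin.castSucc_lt_last i).ne

lemma sauer {p k : ℕ} :
    ∀ (n d : ℕ) (G : Finset (Fin n → Fin p)),
      (∀ S, kNatShatters k G S → S.card ≤ d) → G.card ≤ sauerPhi k (p.choose (k+1)) n d := by
  classical
  intro n
  induction n with
  | zero =>
    intro d G _
    rw [sauerPhi_zero]
    exact Finset.card_le_one.2 fun a _ b _ => funext fun i => i.elim0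
  | succ n ih =>
    intro d G hG
    set B := p.choose (k+1) with hBdef
    set G' := G.image Fin.init with hG'def
    set V : (Fin n → Fin p) → Finset (Fin p) := lastVals G with hVdef
    have hG' : ∀ S, kNatShatters k G' S → S.card ≤ d := by
      intro S hS
      have := hG _ (shatters_image_init G S hS)
      rwa [Finset.card_image_of_injective _ (Fin.castSucc_injective n)] at this
    have hcard : G.card = ∑ g' ∈ G', (G.filter fun f => Fin.init f = g').card :=
      Finset.card_eq_sum_card_image Fin.init G
    have hfiber : ∀ g' : Fin n → Fin p,
        (G.filter fun f => Fin.init f = g').card = (V g').card := by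
      intro g'
      refine (Finset.card_image_of_injOn ?_).symm
      intro f1 h1 f2 h2 heq
      simp only [Finset.mem_coe, Finset.mem_filter] at h1 h2
      funext j
      refine Fin.lastCases ?_ ?_ j
      · exact heq
      · intro i
        exact congrFun (h1.2.trans h2.2.symm) i
    rcases d with _ | d'
    · -- d = 0
      have hVk : ∀ g' ∈ G', (V g').card ≤ k := by
        intro g' hg'
        by_contra hlt
        push_neg at hlt
        obtain ⟨T, hTsub, hTcard⟩ := Finset.exists_subset_card_eq hlt
        have hne : kNatShatters k ((G.image Fin.init).filter fun x => T ⊆ lastVals G x) ∅ :=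
          ⟨fun _ => ∅, by simp, fun g _ =>
            ⟨g', Finset.mem_filter.2 ⟨hg', hTsub⟩, by simp⟩⟩
        have := hG _ (shatters_insert_last G T hTcard ∅ hne)
        rw [card_insert_last] at this
        simp at this
      calc G.card = ∑ g' ∈ G', (G.filter fun f => Fin.init f = g').card := hcard
        _ = ∑ g' ∈ G', (V g').card := by
            exact Finset.sum_congr rfl fun g' _ => hfiber g'
        _ ≤ ∑ _g' ∈ G', k := Finset.sum_le_sum fun g' hg' => hVk g' hg'
        _ = G'.card * k := by rw [Finset.sum_const, smul_eq_mul]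
        _ ≤ sauerPhi k B n 0 * k := Nat.mul_le_mul_right k (ih 0 G' hG')
        _ = sauerPhi k B (n+1) 0 := by rw [sauerPhi]; ring
    · -- d = d' + 1
      set 𝒯 := Finset.powersetCard (k+1) (Finset.univ : Finset (Fin p)) with h𝒯def
      have h𝒯card : 𝒯.card = B := by
        rw [h𝒯def, Finset.card_powersetCard, Finset.card_univ, Fintype.card_fin]
      have hpow : ∀ g' : Fin n → Fin p,
          Finset.powersetCard (k+1) (V g') = 𝒯.filter fun T => T ⊆ V g' := by
        intro g'
        ext T
        simp only [Finset.mem_powersetCard, Finset.mem_filter, h𝒯def]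
        constructor
        · rintro ⟨h1, h2⟩; exact ⟨⟨Finset.subset_univ T, h2⟩, h1⟩
        · rintro ⟨⟨_, h2⟩, h1⟩; exact ⟨h1, h2⟩
      have hVcard : ∀ g' : Fin n → Fin p,
          (V g').card ≤ k + (𝒯.filter fun T => T ⊆ V g').card := by
        intro g'
        have := le_add_choose k (V g').card
        rwa [← Finset.card_powersetCard (k+1) (V g'), hpow g'] at this
      have hswap : ∑ g' ∈ G', (𝒯.filter fun T => T ⊆ V g').card
          = ∑ T ∈ 𝒯, (G'.filter fun g' => T ⊆ V g').card := by
        simp only [Finset.card_filter]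
        exact Finset.sum_comm
      have hGT : ∀ T ∈ 𝒯, (G'.filter fun g' => T ⊆ V g').card ≤ sauerPhi k B n d' := by
        intro T hT
        have hTcard : T.card = k + 1 := (Finset.mem_powersetCard.1 hT).2
        refine ih d' _ ?_
        intro S hS
        have := hG _ (shatters_insert_last G T hTcard S hS)
        rw [card_insert_last] at this
        omega
      calc G.card = ∑ g' ∈ G', (G.filter fun f => Fin.init f = g').card := hcard
        _ = ∑ g' ∈ G', (V g').card := Finset.sum_congr rfl fun g' _ => hfiber g'
        _ ≤ ∑ g' ∈ G', (k + (𝒯.filter fun T => T ⊆ V g').card) :=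
            Finset.sum_le_sum fun g' _ => hVcard g'
        _ = G'.card * k + ∑ g' ∈ G', (𝒯.filter fun T => T ⊆ V g').card := by
            rw [Finset.sum_add_distrib, Finset.sum_const, smul_eq_mul]
        _ = G'.card * k + ∑ T ∈ 𝒯, (G'.filter fun g' => T ⊆ V g').card := by rw [hswap]
        _ ≤ sauerPhi k B n (d'+1) * k + ∑ _T ∈ 𝒯, sauerPhi k B n d' := by
            exact Nat.add_le_add (Nat.mul_le_mul_right k (ih (d'+1) G' hG'))
              (Finset.sum_le_sum hGT)
        _ = k * sauerPhi k B n (d'+1) + B * sauerPhi k B n d' := by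
            rw [Finset.sum_const, smul_eq_mul, h𝒯card]; ring
        _ = sauerPhi k B (n+1) (d'+1) := by rw [sauerPhi]

lemma sauerPhi_le_real (k B : ℕ) (hk : 1 ≤ k) (hB : 1 ≤ B) :
    ∀ (n d : ℕ), (sauerPhi k B n d : ℝ)
      ≤ (2*k*B : ℝ)^d * ((k : ℝ) + 1/(2*k))^n := by
  have hk0 : (0:ℝ) < k := by exact_mod_cast hk
  have hB0 : (1:ℝ) ≤ B := by exact_mod_cast hB
  have hk1 : (1:ℝ) ≤ (k:ℝ) := by exact_mod_cast hk
  have hkB : (1:ℝ) ≤ 2*k*B := by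
    nlinarith [mul_le_mul hk1 hB0 zero_le_one (by linarith : (0:ℝ) ≤ (k:ℝ))]
  have hX0 : (0:ℝ) < (k : ℝ) + 1/(2*k) := by positivity
  intro n
  induction n with
  | zero =>
    intro d
    rw [sauerPhi_zero]
    simpa using one_le_pow₀ hkB (n := d)
  | succ n ih =>
    intro d
    rcases d with _ | d'
    · have h0 := ih 0
      rw [sauerPhi]
      push_cast
      calc (k:ℝ) * (sauerPhi k B n 0 : ℝ) ≤ (k:ℝ) * ((2*k*B:ℝ)^0 * ((k:ℝ) + 1/(2*k))^n) := by
            exact mul_le_mul_of_nonneg_left h0 (le_of_lt hk0)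
        _ = (k:ℝ) * ((k:ℝ) + 1/(2*k))^n := by ring
        _ ≤ ((k:ℝ) + 1/(2*k)) * ((k:ℝ) + 1/(2*k))^n := by
            have : (k:ℝ) ≤ (k:ℝ) + 1/(2*k) := le_add_of_nonneg_right (by positivity)
            exact mul_le_mul_of_nonneg_right this (le_of_lt (pow_pos hX0 n))
        _ = (2*k*B:ℝ)^0 * ((k:ℝ) + 1/(2*k))^(n+1) := by ring
    · have h1 := ih (d'+1)
      have h2 := ih d'
      have hXid : (2*(k:ℝ)*B) * ((k:ℝ) + 1/(2*k)) = 2*k*k*B + B := by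
        field_simp
      rw [sauerPhi]
      push_cast
      calc (k:ℝ) * (sauerPhi k B n (d'+1) : ℝ) + (B:ℝ) * (sauerPhi k B n d' : ℝ)
          ≤ (k:ℝ) * ((2*k*B:ℝ)^(d'+1) * ((k:ℝ) + 1/(2*k))^n)
            + (B:ℝ) * ((2*k*B:ℝ)^d' * ((k:ℝ) + 1/(2*k))^n) := by
            have hc1 := mul_le_mul_of_nonneg_left h1 (le_of_lt hk0)
            have hc2 := mul_le_mul_of_nonneg_left h2 (by positivity : (0:ℝ) ≤ (B:ℝ))
            linarith
        _ = (2*k*B:ℝ)^d' * ((k:ℝ) + 1/(2*k))^n * ((k:ℝ)*(2*k*B) + B) := by ring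
        _ = (2*k*B:ℝ)^d' * ((k:ℝ) + 1/(2*k))^n * ((2*(k:ℝ)*B) * ((k:ℝ) + 1/(2*k))) := by
            rw [hXid]; ring
        _ = (2*k*B:ℝ)^(d'+1) * ((k:ℝ) + 1/(2*k))^(n+1) := by ring

lemma two_mul_le_two_pow : ∀ k : ℕ, 2 ≤ k → 2*k ≤ 2^k := by
  intro k
  induction k with
  | zero => omega
  | succ k ih =>
    intro h
    rcases Nat.lt_or_ge k 2 with h2 | h2
    · interval_cases k <;> simp_all
    · have := ih h2
      have h4 : 4 ≤ 2^k := by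
        calc 4 = 2*2 := rfl
          _ ≤ 2*k := by omega
          _ ≤ 2^k := this
      rw [pow_succ]
      omega

theorem stmt13 {m p k dN dE : ℕ} (hk : 2 ≤ k) (hp : k + 1 < p)
    (H : Finset (Fin m → Fin p))
    (hNat : ∀ S : Finset (Fin m), kNatShatters k H S → S.card ≤ dN)
    (hExp : ∃ S : Fin dE → Fin m, (k + 1) ^ dE ≤ (H.image fun h => h ∘ S).card) :
    (dE : ℝ) ≤ 60 * k ^ 2 * dN * Real.log p := by
  classical
  obtain ⟨S, hS⟩ := hExp
  set G := H.image fun h => h ∘ S with hGdef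
  -- Step 1: the Natarajan dimension of G is at most dN
  have hGnat : ∀ T : Finset (Fin dE), kNatShatters k G T → T.card ≤ dN := by
    intro T hT
    obtain ⟨y, hy1, hy2⟩ := hT
    have hinj : Set.InjOn S ↑T := by
      intro i hi j hj hij
      by_contra hne
      have hiT : i ∈ T := hi
      have hjT : j ∈ T := hj
      obtain ⟨a, ha⟩ := Finset.card_pos.1 (by rw [hy1 i hiT]; omega)
      obtain ⟨b, hb, hba⟩ : ∃ b ∈ y j, b ≠ a := by
        by_contra hcon
        push_neg at hcon
        have hsub : y j ⊆ {a} := fun x hx => Finset.mem_singleton.2 (hcon x hx)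
        have := Finset.card_le_card hsub
        rw [hy1 j hjT, Finset.card_singleton] at this
        omega
      set g : Fin dE → Fin p := fun l => if l = j then b else if l = i then a
          else if hl : (y l).Nonempty then hl.choose else a with hgdef
      have hgmem : ∀ l ∈ T, g l ∈ y l := by
        intro l hl
        rcases eq_or_ne l j with rfl | h1
        · simpa [hgdef] using hb
        · rcases eq_or_ne l i with rfl | h2
          · simpa [hgdef, h1] using ha
          · have hne' : (y l).Nonempty := Finset.card_pos.1 (by rw [hy1 l hl]; omega)
            simp only [hgdef, if_neg h1, if_neg h2, dif_pos hne']
            exact hne'.choose_spec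
      obtain ⟨f, hfG, hfg⟩ := hy2 g hgmem
      obtain ⟨h, _, rfl⟩ := Finset.mem_image.1 hfG
      have h1 : h (S i) = g i := hfg i hiT
      have h2 : h (S j) = g j := hfg j hjT
      have hgi : g i = a := by simp [hgdef, hne]
      have hgj : g j = b := by simp [hgdef]
      apply hba
      rw [← hgj, ← h2, ← hij, h1, hgi]
    have hHsh : kNatShatters k H (T.image S) := by
      refine ⟨fun c => if hc : ∃ i, i ∈ T ∧ S i = c then y hc.choose else ∅, ?_, ?_⟩
      · intro c hc
        obtain ⟨i, hi, rfl⟩ := Finset.mem_image.1 hc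
        have hex : ∃ i', i' ∈ T ∧ S i' = S i := ⟨i, hi, rfl⟩
        simp only [dif_pos hex]
        exact hy1 _ hex.choose_spec.1
      · intro g hg
        have hg0 : ∀ i ∈ T, g (S i) ∈ y i := by
          intro i hi
          have hex : ∃ i', i' ∈ T ∧ S i' = S i := ⟨i, hi, rfl⟩
          have hgm := hg (S i) (Finset.mem_image_of_mem S hi)
          simp only [dif_pos hex] at hgm
          have heq : hex.choose = i :=
            hinj (Finset.mem_coe.2 hex.choose_spec.1) (Finset.mem_coe.2 hi) hex.choose_spec.2
          rwa [heq] at hgm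
        obtain ⟨f, hfG, hfg⟩ := hy2 (g ∘ S) hg0
        obtain ⟨h, hH, rfl⟩ := Finset.mem_image.1 hfG
        refine ⟨h, hH, ?_⟩
        intro c hc
        obtain ⟨i, hi, rfl⟩ := Finset.mem_image.1 hc
        exact hfg i hi
    have := hNat _ hHsh
    rwa [Finset.card_image_of_injOn hinj] at this
  -- Step 2: Sauer bound
  set B := p.choose (k+1) with hBdef
  have hsauer : G.card ≤ sauerPhi k B dE dN := sauer dE dN G hGnat
  have hB1 : 1 ≤ B := Nat.choose_pos (le_of_lt hp)
  have hPhiR := sauerPhi_le_real k B (by omega) hB1 dE dN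
  -- Step 3: numeric bound 2kB ≤ p^(3k)
  have hp4 : 4 ≤ p := by omega
  have h2kB : 2*k*B ≤ p^(3*k) := by
    have h1 : 2*k ≤ p^k := by
      calc 2*k ≤ 2^k := two_mul_le_two_pow k hk
        _ ≤ p^k := Nat.pow_le_pow_left (by omega) k
    have h2 : B ≤ p^(k+1) := Nat.choose_le_pow p (k+1)
    calc 2*k*B ≤ p^k * p^(k+1) := Nat.mul_le_mul h1 h2
      _ = p^(2*k+1) := by rw [← pow_add]; ring_nf
      _ ≤ p^(3*k) := Nat.pow_le_pow_right (by omega) (by omega)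
  -- Step 4: real chain
  have hk0 : (0:ℝ) < (k:ℝ) := by positivity
  have hk2 : (2:ℝ) ≤ (k:ℝ) := by exact_mod_cast hk
  set X : ℝ := (k:ℝ) + 1/(2*k) with hXdef
  have hX0 : (0:ℝ) < X := by rw [hXdef]; positivity
  have hchain : ((k:ℝ)+1)^dE ≤ ((p:ℝ)^(3*k))^dN * X^dE := by
    have hc1 : ((k:ℝ)+1)^dE ≤ (G.card : ℝ) := by
      have : ((k+1)^dE : ℕ) ≤ G.card := hS
      exact_mod_cast this
    have hc2 : (G.card : ℝ) ≤ (sauerPhi k B dE dN : ℝ) := by exact_mod_cast hsauer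
    have hc3 : ((2*k*B : ℕ):ℝ)^dN ≤ ((p:ℝ)^(3*k))^dN := by
      apply pow_le_pow_left₀ (by positivity)
      exact_mod_cast h2kB
    have hc4 : (2*(k:ℝ)*B)^dN * X^dE ≤ ((p:ℝ)^(3*k))^dN * X^dE := by
      apply mul_le_mul_of_nonneg_right _ (le_of_lt (pow_pos hX0 dE))
      calc (2*(k:ℝ)*B)^dN = ((2*k*B : ℕ):ℝ)^dN := by push_cast; ring_nf
        _ ≤ ((p:ℝ)^(3*k))^dN := hc3
    calc ((k:ℝ)+1)^dE ≤ (sauerPhi k B dE dN : ℝ) := le_trans hc1 hc2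
      _ ≤ (2*(k:ℝ)*B)^dN * X^dE := hPhiR
      _ ≤ ((p:ℝ)^(3*k))^dN * X^dE := hc4
  -- R := (k+1)/X ; R^dE ≤ p^(3k dN)
  set R : ℝ := ((k:ℝ)+1)/X with hRdef
  have hR1 : 1 < R := by
    rw [hRdef, lt_div_iff₀ hX0, hXdef]
    have : 1/(2*(k:ℝ)) < 1 := by
      rw [div_lt_one (by positivity)]; linarith
    linarith
  have hR0 : 0 < R := by linarith
  have hRpow : R^dE ≤ (p:ℝ)^(3*k*dN) := by
    rw [hRdef, div_pow, div_le_iff₀ (pow_pos hX0 dE)]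
    calc ((k:ℝ)+1)^dE ≤ ((p:ℝ)^(3*k))^dN * X^dE := hchain
      _ = (p:ℝ)^(3*k*dN) * X^dE := by rw [← pow_mul]
  have hlog : (dE:ℝ) * Real.log R ≤ (3*k*dN : ℕ) * Real.log p := by
    have := Real.log_le_log (pow_pos hR0 dE) hRpow
    rwa [Real.log_pow, Real.log_pow] at this
  -- log R ≥ 1/(2k)
  have hlogR : 1/(2*(k:ℝ)) ≤ Real.log R := by
    have h1 : 1 - R⁻¹ ≤ Real.log R := Real.one_sub_inv_le_log_of_pos hR0
    have h2 : R⁻¹ = X/((k:ℝ)+1) := by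
      rw [hRdef, inv_div]
    have h3 : 1/(2*(k:ℝ)) ≤ 1 - X/((k:ℝ)+1) := by
      have hid : 1 - ((k:ℝ) + 1/(2*(k:ℝ)))/((k:ℝ)+1) - 1/(2*(k:ℝ))
          = ((k:ℝ)-2)/(2*(k:ℝ)*((k:ℝ)+1)) := by
        field_simp
        ring
      have hge : (0:ℝ) ≤ ((k:ℝ)-2)/(2*(k:ℝ)*((k:ℝ)+1)) :=
        div_nonneg (by linarith) (by positivity)
      rw [← hid] at hge
      rw [hXdef]
      linarith
    rw [h2] at h1
    linarith
  -- finish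
  have hlogp : 0 ≤ Real.log p := Real.log_nonneg (by exact_mod_cast Nat.one_le_iff_ne_zero.2 (by omega))
  have hfin : (dE:ℝ) * (1/(2*(k:ℝ))) ≤ (3*(k:ℝ)*dN) * Real.log p := by
    have hd0 : (0:ℝ) ≤ (dE:ℝ) := Nat.cast_nonneg dE
    calc (dE:ℝ) * (1/(2*(k:ℝ))) ≤ (dE:ℝ) * Real.log R :=
          mul_le_mul_of_nonneg_left hlogR hd0
      _ ≤ (3*k*dN : ℕ) * Real.log p := hlog
      _ = (3*(k:ℝ)*dN) * Real.log p := by push_cast; ring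
  have hscale := mul_le_mul_of_nonneg_right hfin (by positivity : (0:ℝ) ≤ 2*(k:ℝ))
  have hdE : (dE:ℝ) ≤ 6*(k:ℝ)^2*dN * Real.log p := by
    have hne : (2*(k:ℝ)) ≠ 0 := by positivity
    calc (dE:ℝ) = (dE:ℝ) * (1/(2*(k:ℝ))) * (2*(k:ℝ)) := by field_simp
      _ ≤ (3*(k:ℝ)*dN) * Real.log p * (2*(k:ℝ)) := hscale
      _ = 6*(k:ℝ)^2*dN * Real.log p := by ring
  have hnn : (0:ℝ) ≤ (k:ℝ)^2*dN*Real.log p := by positivity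
  nlinarith [hdE, hnn]
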